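/- arXiv:1806.00841 — 2 statements merged into one kernel-verified Lean document; each statement's English description precedes it below -/
import Mathlib

section
/- Bounded distortion for the Gauss map: there exists C > 0 such that for every n ≥ 1, every word (i_1,…,i_n) ∈ ℕ^n, and all x, y ∈ I_{i_1…i_n}, one has C^{−1} ≤ (T^n)′(x)/(T^n)′(y) ≤ C; moreover, for every x ∈ I_{i_1…i_n}, C^{−1} ≤ |(T^n)′(x)|·|I_{i_1…i_n}| ≤ C, where |I_{i_1…i_n}| denotes the diameter of I_{i_1…i_n}. -/
/-- The Gauss map `T x = 1/x - ⌊1/x⌋` (with `T 0 = 0`). -/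
noncomputable def gaussMap (x : ℝ) : ℝ := if x = 0 then 0 else Int.fract x⁻¹

/-- The `k`-th continued fraction digit of `x`: `i_{k+1} = ⌊1/(T^k x)⌋`. -/
noncomputable def cfDigit (x : ℝ) (k : ℕ) : ℕ := ⌊(gaussMap^[k] x)⁻¹⌋₊

/-- The cylinder `I_{i_1…i_n}`: irrationals of `(0,1)` whose continued fraction expansion
starts with the word `i`. -/
def wordCyl (n : ℕ) (i : Fin n → ℕ+) : Set ℝ :=
  {x | x ∈ Set.Ioo (0 : ℝ) 1 ∧ Irrational x ∧ ∀ k : Fin n, cfDigit x k = (i k : ℕ)}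

namespace BD

open Set

/-- elementary inverse branch `t ↦ 1/(a+t)` -/
noncomputable def fa (a : ℕ+) (t : ℝ) : ℝ := ((a : ℝ) + t)⁻¹

/-- Möbius map associated to a word (outermost digit first). -/
noncomputable def phi : List ℕ+ → ℝ → ℝ
  | [], t => t
  | a :: l, t => fa a (phi l t)

@[simp] lemma phi_nil (t : ℝ) : phi [] t = t := rfl
@[simp] lemma phi_cons (a : ℕ+) (l : List ℕ+) (t : ℝ) :
    phi (a :: l) t = fa a (phi l t) := rfl

/-- continuant quadruple `(p, p', q, q')`: `phi l t = (p' t + p)/(q' t + q)`. -/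
def cont : List ℕ+ → ℤ × ℤ × ℤ × ℤ
  | [] => (0, 1, 1, 0)
  | a :: l =>
    let c := cont l
    (c.2.2.1, c.2.2.2, (a : ℤ) * c.2.2.1 + c.1, (a : ℤ) * c.2.2.2 + c.2.1)

def P (l : List ℕ+) : ℤ := (cont l).1
def P' (l : List ℕ+) : ℤ := (cont l).2.1
def Q (l : List ℕ+) : ℤ := (cont l).2.2.1
def Q' (l : List ℕ+) : ℤ := (cont l).2.2.2

@[simp] lemma P_nil : P [] = 0 := rfl
@[simp] lemma P'_nil : P' [] = 1 := rfl
@[simp] lemma Q_nil : Q [] = 1 := rfl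
@[simp] lemma Q'_nil : Q' [] = 0 := rfl
@[simp] lemma P_cons (a : ℕ+) (l : List ℕ+) : P (a :: l) = Q l := rfl
@[simp] lemma P'_cons (a : ℕ+) (l : List ℕ+) : P' (a :: l) = Q' l := rfl
@[simp] lemma Q_cons (a : ℕ+) (l : List ℕ+) : Q (a :: l) = (a : ℤ) * Q l + P l := rfl
@[simp] lemma Q'_cons (a : ℕ+) (l : List ℕ+) : Q' (a :: l) = (a : ℤ) * Q' l + P' l := rfl

lemma basic (l : List ℕ+) : 0 ≤ P l ∧ 0 ≤ P' l ∧ 1 ≤ Q l ∧ 0 ≤ Q' l := by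
  induction l with
  | nil => simp
  | cons a l ih =>
    obtain ⟨h1, h2, h3, h4⟩ := ih
    have ha : (1 : ℤ) ≤ (a : ℤ) := by exact_mod_cast a.one_le
    refine ⟨h3.trans' (by linarith), h4.trans' (by linarith), ?_, ?_⟩
    · show 1 ≤ (a : ℤ) * Q l + P l; nlinarith
    · show 0 ≤ (a : ℤ) * Q' l + P' l; nlinarith

lemma P_nonneg (l : List ℕ+) : 0 ≤ P l := (basic l).1
lemma P'_nonneg (l : List ℕ+) : 0 ≤ P' l := (basic l).2.1
lemma Q_pos (l : List ℕ+) : 1 ≤ Q l := (basic l).2.2.1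
lemma Q'_nonneg (l : List ℕ+) : 0 ≤ Q' l := (basic l).2.2.2

lemma key_cons (a : ℕ+) (l : List ℕ+) :
    P' (a :: l) ≤ P (a :: l) ∧ Q' (a :: l) ≤ Q (a :: l) ∧
      P (a :: l) ≤ Q (a :: l) ∧ P' (a :: l) ≤ Q' (a :: l) := by
  induction l generalizing a with
  | nil =>
    have ha : (1 : ℤ) ≤ (a : ℤ) := by exact_mod_cast a.one_le
    simp only [P_cons, P'_cons, Q_cons, Q'_cons, P_nil, P'_nil, Q_nil, Q'_nil]
    constructor
    · linarith
    · constructor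
      · linarith
      · constructor <;> linarith
  | cons b l ih =>
    obtain ⟨h1, h2, h3, h4⟩ := ih b
    have ha : (1 : ℤ) ≤ (a : ℤ) := by exact_mod_cast a.one_le
    obtain ⟨g1, g2, g3, g4⟩ := basic (b :: l)
    refine ⟨h2, ?_, ?_, ?_⟩
    · show (a : ℤ) * Q' (b :: l) + P' (b :: l) ≤ (a : ℤ) * Q (b :: l) + P (b :: l)
      nlinarith
    · show Q (b :: l) ≤ (a : ℤ) * Q (b :: l) + P (b :: l)
      nlinarith
    · show Q' (b :: l) ≤ (a : ℤ) * Q' (b :: l) + P' (b :: l)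
      nlinarith

lemma Q'_le_Q (l : List ℕ+) : Q' l ≤ Q l := by
  cases l with
  | nil => simp
  | cons a l => exact (key_cons a l).2.1

/-- determinant identity -/
lemma det (l : List ℕ+) : P' l * Q l - P l * Q' l = (-1) ^ l.length := by
  induction l with
  | nil => simp
  | cons a l ih =>
    simp only [P_cons, P'_cons, Q_cons, Q'_cons, List.length_cons, pow_succ]
    ring_nf
    ring_nf at ih
    linarith

/-- the denominator of the Möbius map `phi l`. -/
noncomputable def den (l : List ℕ+) (t : ℝ) : ℝ := (Q' l : ℝ) * t + (Q l : ℝ)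

/-- the numerator of the Möbius map `phi l`. -/
noncomputable def num (l : List ℕ+) (t : ℝ) : ℝ := (P' l : ℝ) * t + (P l : ℝ)

lemma den_pos {l : List ℕ+} {t : ℝ} (ht : 0 ≤ t) : 0 < den l t := by
  have h1 : (1 : ℝ) ≤ (Q l : ℝ) := by exact_mod_cast Q_pos l
  have h2 : (0 : ℝ) ≤ (Q' l : ℝ) := by exact_mod_cast Q'_nonneg l
  have : 0 ≤ (Q' l : ℝ) * t := mul_nonneg h2 ht
  unfold den; linarith

lemma num_nonneg {l : List ℕ+} {t : ℝ} (ht : 0 ≤ t) : 0 ≤ num l t := by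
  have h1 : (0 : ℝ) ≤ (P l : ℝ) := by exact_mod_cast P_nonneg l
  have h2 : (0 : ℝ) ≤ (P' l : ℝ) := by exact_mod_cast P'_nonneg l
  have : 0 ≤ (P' l : ℝ) * t := mul_nonneg h2 ht
  unfold num; linarith

lemma detR (l : List ℕ+) :
    (P' l : ℝ) * (Q l : ℝ) - (P l : ℝ) * (Q' l : ℝ) = (-1) ^ l.length := by
  exact_mod_cast congrArg (Int.cast : ℤ → ℝ) (det l)

lemma phi_eq {l : List ℕ+} {t : ℝ} (ht : 0 ≤ t) : phi l t = num l t / den l t := by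
  induction l with
  | nil => simp [num, den]
  | cons a l ih =>
    have hd : den l t ≠ 0 := (den_pos ht).ne'
    have hd2 : (0 : ℝ) < (a : ℝ) * den l t + num l t := by
      have ha : (1 : ℝ) ≤ (a : ℝ) := by exact_mod_cast a.one_le
      nlinarith [den_pos (l := l) ht, num_nonneg (l := l) ht]
    have h5 : den (a :: l) t = ((a:ℝ) * (Q' l : ℝ) + (P' l : ℝ)) * t + ((a:ℝ) * (Q l : ℝ) + (P l : ℝ)) := by
      unfold den
      rw [Q_cons, Q'_cons]
      push_cast
      ring
    have h3 : (a:ℝ) + num l t / den l t = den (a :: l) t / den l t := by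
      rw [h5]
      unfold num den
      unfold den at hd
      rw [eq_div_iff hd, add_mul, div_mul_cancel₀ _ hd]
      ring
    have h4 : num (a :: l) t = den l t := by
      unfold num den; simp only [P_cons, P'_cons]
    rw [phi_cons, ih]
    unfold fa
    rw [h3, inv_div, h4]

lemma phi_mem {l : List ℕ+} {t : ℝ} (ht : t ∈ Ioo (0:ℝ) 1) : phi l t ∈ Ioo (0:ℝ) 1 := by
  induction l with
  | nil => simpa using ht
  | cons a l ih =>
    have ha : (1 : ℝ) ≤ (a : ℝ) := by exact_mod_cast a.one_le
    obtain ⟨h0, h1⟩ := ih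
    constructor
    · have : (0:ℝ) < (a : ℝ) + phi l t := by linarith
      exact inv_pos.mpr this
    · have hgt : (1:ℝ) < (a : ℝ) + phi l t := by linarith
      have hpos : (0:ℝ) < (a : ℝ) + phi l t := by linarith
      have := mul_inv_cancel₀ hpos.ne'
      show ((a : ℝ) + phi l t)⁻¹ < 1
      nlinarith [inv_pos.mpr hpos]

lemma phi_irr {l : List ℕ+} {t : ℝ} (ht : Irrational t) : Irrational (phi l t) := by
  induction l with
  | nil => simpa using ht
  | cons a l ih =>
    have h1 : Irrational (((a : ℕ) : ℝ) + phi l t) := irrational_natCast_add_iff.mpr ih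
    have h2 : Irrational (((a : ℕ) : ℝ) + phi l t)⁻¹ := h1.inv
    show Irrational ((a : ℝ) + phi l t)⁻¹
    exact_mod_cast h2

lemma phi_diff {l : List ℕ+} {t s : ℝ} (ht : 0 ≤ t) (hs : 0 ≤ s) :
    phi l t - phi l s = (-1) ^ l.length * (t - s) / (den l t * den l s) := by
  have hdt := den_pos (l := l) ht
  have hds := den_pos (l := l) hs
  rw [phi_eq ht, phi_eq hs]
  have hdet := detR l
  field_simp
  unfold num den
  unfold num den at *
  nlinarith [hdet, sq_nonneg ((t - s)), mul_pos hdt hds]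

lemma gauss_fa (a : ℕ+) {s : ℝ} (hs : s ∈ Ico (0:ℝ) 1) : gaussMap (fa a s) = s := by
  have ha : (1 : ℝ) ≤ (a : ℝ) := by exact_mod_cast a.one_le
  have hpos : (0:ℝ) < (a : ℝ) + s := by linarith [hs.1]
  have hne : ((a : ℝ) + s)⁻¹ ≠ 0 := inv_ne_zero hpos.ne'
  unfold gaussMap fa
  rw [if_neg hne, inv_inv]
  have : (a : ℝ) + s = ((a : ℕ) : ℤ) + s := by push_cast; ring
  rw [this, Int.fract_intCast_add, Int.fract_eq_self.mpr ⟨hs.1, hs.2⟩]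

lemma iter_phi {l : List ℕ+} {t : ℝ} (ht : t ∈ Ioo (0:ℝ) 1) :
    gaussMap^[l.length] (phi l t) = t := by
  induction l with
  | nil => simp
  | cons a l ih =>
    have hmem := phi_mem (l := l) ht
    rw [List.length_cons, phi_cons, Function.iterate_succ_apply,
      gauss_fa a ⟨hmem.1.le, hmem.2⟩, ih]

/-- the inverse Möbius map -/
noncomputable def psi (l : List ℕ+) (x : ℝ) : ℝ :=
  ((P l : ℝ) - (Q l : ℝ) * x) / ((Q' l : ℝ) * x - (P' l : ℝ))

lemma den_psi {l : List ℕ+} {t : ℝ} (ht : 0 ≤ t) :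
    (Q' l : ℝ) * phi l t - (P' l : ℝ) = -(-1) ^ l.length / den l t := by
  have hdt := den_pos (l := l) ht
  rw [phi_eq ht]
  have hdet := detR l
  field_simp
  unfold num den at *
  nlinarith [hdet]

lemma num_psi {l : List ℕ+} {t : ℝ} (ht : 0 ≤ t) :
    (P l : ℝ) - (Q l : ℝ) * phi l t = -(-1) ^ l.length * t / den l t := by
  have hdt := den_pos (l := l) ht
  rw [phi_eq ht]
  have hdet := detR l
  field_simp
  unfold num den at *
  nlinarith [hdet]

lemma psi_phi {l : List ℕ+} {t : ℝ} (ht : 0 ≤ t) : psi l (phi l t) = t := by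
  have hdt := den_pos (l := l) ht
  have hsgn : ((-1 : ℝ)) ^ l.length ≠ 0 := by positivity
  have hsgn' : -((-1 : ℝ)) ^ l.length ≠ 0 := neg_ne_zero.mpr hsgn
  unfold psi
  rw [den_psi ht, num_psi ht]
  field_simp

lemma mem_cyl_imp {n : ℕ} {i : Fin n → ℕ+} {x : ℝ} (hx : x ∈ wordCyl n i) :
    ∃ t ∈ Ioo (0:ℝ) 1, Irrational t ∧ x = phi (List.ofFn i) t := by
  induction n generalizing x with
  | zero =>
    exact ⟨x, hx.1, hx.2.1, by simp⟩
  | succ n ih =>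
    obtain ⟨⟨hx0, hx1⟩, hxI, hd⟩ := hx
    set a : ℕ+ := i 0 with ha_def
    have h0 : ⌊x⁻¹⌋₊ = (a : ℕ) := by
      have := hd 0
      simpa [cfDigit] using this
    have hxinv_pos : 0 < x⁻¹ := inv_pos.mpr hx0
    have hxinvI : Irrational x⁻¹ := hxI.inv
    have hle : ((a : ℕ) : ℝ) ≤ x⁻¹ ∧ x⁻¹ < (a : ℕ) + 1 := by
      constructor
      · exact (Nat.floor_eq_iff hxinv_pos.le).mp h0 |>.1
      · exact (Nat.floor_eq_iff hxinv_pos.le).mp h0 |>.2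
    have hlt : ((a : ℕ) : ℝ) < x⁻¹ := lt_of_le_of_ne hle.1 (Ne.symm (hxinvI.ne_nat _))
    set s : ℝ := x⁻¹ - (a : ℕ) with hs_def
    have hs0 : 0 < s := by simp [hs_def]; linarith
    have hs1 : s < 1 := by simp [hs_def]; linarith [hle.2]
    have hsI : Irrational s := by
      have := irrational_sub_natCast_iff (n := (a : ℕ)) (x := x⁻¹) |>.mpr hxinvI
      rw [hs_def]; exact_mod_cast this
    have hgauss : gaussMap x = s := by
      unfold gaussMap
      rw [if_neg hx0.ne']
      rw [Int.fract]
      have hfl : ⌊x⁻¹⌋ = ((a : ℕ) : ℤ) := by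
        rw [Int.floor_eq_iff]
        constructor
        · push_cast; exact hle.1
        · push_cast; exact hle.2
      rw [hfl, hs_def]; push_cast; ring
    have hs_cyl : s ∈ wordCyl n (i ∘ Fin.succ) := by
      refine ⟨⟨hs0, hs1⟩, hsI, ?_⟩
      intro k
      have := hd k.succ
      simp only [cfDigit, Fin.val_succ] at this ⊢
      have h7 : gaussMap^[(k : ℕ)] s = gaussMap^[(k : ℕ) + 1] x := by
        rw [← hgauss, ← Function.iterate_succ_apply]
      rw [h7]
      exact this
    obtain ⟨t, ht, htI, hts⟩ := ih hs_cyl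
    refine ⟨t, ht, htI, ?_⟩
    rw [List.ofFn_succ, phi_cons]
    show x = fa (i 0) (phi (List.ofFn (i ∘ Fin.succ)) t)
    rw [← hts]
    unfold fa
    have : (a : ℝ) + s = x⁻¹ := by push_cast [hs_def]; ring
    rw [show ((i 0 : ℝ)) = (a : ℝ) from rfl, this, inv_inv]

lemma imp_mem_cyl {t : ℝ} (ht : t ∈ Ioo (0:ℝ) 1)
    (htI : Irrational t) : ∀ {n : ℕ} (i : Fin n → ℕ+), phi (List.ofFn i) t ∈ wordCyl n i := by
  intro n
  induction n with
  | zero =>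
    intro i
    refine ⟨by simpa using ht, by simpa using htI, ?_⟩
    intro k; exact absurd k.2 (by omega)
  | succ n ih =>
    intro i
    set a : ℕ+ := i 0 with ha_def
    set s : ℝ := phi (List.ofFn (i ∘ Fin.succ)) t with hs_def
    have hs_cyl : s ∈ wordCyl n (i ∘ Fin.succ) := ih (i ∘ Fin.succ)
    obtain ⟨⟨hs0, hs1⟩, hsI, hsd⟩ := hs_cyl
    have hx_eq : phi (List.ofFn i) t = fa a s := by
      rw [List.ofFn_succ, phi_cons, hs_def]
      rfl
    have ha1 : (1 : ℝ) ≤ (a : ℝ) := by exact_mod_cast a.one_le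
    have hpos : (0:ℝ) < (a : ℝ) + s := by linarith
    have hx_mem : fa a s ∈ Ioo (0:ℝ) 1 := by
      constructor
      · exact inv_pos.mpr hpos
      · show ((a:ℝ) + s)⁻¹ < 1
        have := mul_inv_cancel₀ hpos.ne'
        nlinarith [inv_pos.mpr hpos]
    have hxI : Irrational (fa a s) := by
      have h1 : Irrational (((a : ℕ) : ℝ) + s) := irrational_natCast_add_iff.mpr hsI
      have h2 := h1.inv
      show Irrational ((a : ℝ) + s)⁻¹
      exact_mod_cast h2
    have hginv : gaussMap (fa a s) = s := gauss_fa a ⟨hs0.le, hs1⟩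
    rw [hx_eq]
    refine ⟨hx_mem, hxI, ?_⟩
    intro k
    induction k using Fin.cases with
    | zero =>
      show ⌊(gaussMap^[0] (fa a s))⁻¹⌋₊ = (a : ℕ)
      simp only [Function.iterate_zero, id_eq]
      unfold fa
      rw [inv_inv]
      rw [Nat.floor_eq_iff (by positivity)]
      constructor
      · push_cast; linarith
      · push_cast; linarith
    | succ j =>
      have : cfDigit (fa a s) (j + 1) = cfDigit s j := by
        simp only [cfDigit, Function.iterate_succ_apply, hginv]
      show cfDigit (fa a s) (j.succ : ℕ) = (i j.succ : ℕ)
      rw [Fin.val_succ, this]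
      exact hsd j

lemma contOn (l : List ℕ+) : ContinuousOn (phi l) (Icc (0:ℝ) 1) := by
  have hc : ContinuousOn (fun t : ℝ => num l t / den l t) (Icc 0 1) := by
    apply ContinuousOn.div
    · exact Continuous.continuousOn (by unfold num; continuity)
    · exact Continuous.continuousOn (by unfold den; continuity)
    · exact fun t ht => (den_pos ht.1).ne'
  exact hc.congr (fun t ht => phi_eq ht.1)

lemma deriv_iterate {l : List ℕ+} {t : ℝ} (ht : t ∈ Ioo (0:ℝ) 1) :
    deriv (gaussMap^[l.length]) (phi l t) = (-1) ^ l.length * den l t ^ 2 := by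
  have ht0 : (0:ℝ) ≤ t := ht.1.le
  have hdt := den_pos (l := l) ht0
  have hd0 : (0:ℝ) < den l 0 := den_pos le_rfl
  have hd1 : (0:ℝ) < den l 1 := den_pos zero_le_one
  set x := phi l t with hx_def
  have hA : (Q' l : ℝ) * x - (P' l : ℝ) = -(-1) ^ l.length / den l t := den_psi ht0
  have hB : (P l : ℝ) - (Q l : ℝ) * x = -(-1) ^ l.length * t / den l t := num_psi ht0
  have hsgn : ((-1:ℝ)) ^ l.length ≠ 0 := by
    intro h
    have := pow_eq_zero_iff (n := l.length) (M₀ := ℝ) (a := -1)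
    simp at h
  have hAne : (Q' l : ℝ) * x - (P' l : ℝ) ≠ 0 := by
    rw [hA]
    exact div_ne_zero (neg_ne_zero.mpr hsgn) hdt.ne'
  have himg : ∀ x' ∈ phi l '' Ioo (0:ℝ) 1, gaussMap^[l.length] x' = psi l x' := by
    rintro x' ⟨t', ht', rfl⟩
    rw [iter_phi ht', psi_phi ht'.1.le]
  have hx0 : x - phi l 0 = (-1) ^ l.length * (t - 0) / (den l t * den l 0) :=
    phi_diff ht0 le_rfl
  have hx1 : phi l 1 - x = (-1) ^ l.length * (1 - t) / (den l 1 * den l t) :=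
    phi_diff zero_le_one ht0
  have hnhds : phi l '' Ioo (0:ℝ) 1 ∈ nhds x := by
    rcases Nat.even_or_odd l.length with he | ho
    · have he1 : ((-1:ℝ)) ^ l.length = 1 := he.neg_one_pow
      rw [he1] at hx0 hx1
      have hm : x ∈ Ioo (phi l 0) (phi l 1) := by
        constructor
        · have hp : (0:ℝ) < 1 * (t - 0) / (den l t * den l 0) :=
            div_pos (by nlinarith [ht.1]) (mul_pos hdt hd0)
          linarith
        · have hp : (0:ℝ) < 1 * (1 - t) / (den l 1 * den l t) :=
            div_pos (by nlinarith [ht.2]) (mul_pos hd1 hdt)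
          linarith
      exact Filter.mem_of_superset (isOpen_Ioo.mem_nhds hm)
        (intermediate_value_Ioo zero_le_one (contOn l))
    · have he1 : ((-1:ℝ)) ^ l.length = -1 := ho.neg_one_pow
      rw [he1] at hx0 hx1
      have hm : x ∈ Ioo (phi l 1) (phi l 0) := by
        constructor
        · have hp : (0:ℝ) > -1 * (1 - t) / (den l 1 * den l t) := by
            apply div_neg_of_neg_of_pos (by nlinarith [ht.2]) (mul_pos hd1 hdt)
          linarith
        · have hp : (0:ℝ) > -1 * (t - 0) / (den l t * den l 0) := by
            apply div_neg_of_neg_of_pos (by nlinarith [ht.1]) (mul_pos hdt hd0)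
          linarith
      exact Filter.mem_of_superset (isOpen_Ioo.mem_nhds hm)
        (intermediate_value_Ioo' zero_le_one (contOn l))
  have hev : (gaussMap^[l.length]) =ᶠ[nhds x] psi l :=
    Filter.eventuallyEq_of_mem hnhds himg
  have h1 : HasDerivAt (fun y : ℝ => (P l : ℝ) - (Q l : ℝ) * y) (0 - (Q l : ℝ) * 1) x :=
    (hasDerivAt_const x ((P l : ℝ))).sub ((hasDerivAt_id x).const_mul ((Q l : ℝ)))
  have h2 : HasDerivAt (fun y : ℝ => (Q' l : ℝ) * y - (P' l : ℝ)) ((Q' l : ℝ) * 1 - 0) x :=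
    (((hasDerivAt_id x).const_mul ((Q' l : ℝ)))).sub (hasDerivAt_const x ((P' l : ℝ)))
  have hpsi : HasDerivAt (psi l)
      (((0 - (Q l : ℝ) * 1) * ((Q' l : ℝ) * x - (P' l : ℝ)) -
        ((P l : ℝ) - (Q l : ℝ) * x) * ((Q' l : ℝ) * 1 - 0)) /
        ((Q' l : ℝ) * x - (P' l : ℝ)) ^ 2) x := h1.div h2 hAne
  rw [hev.deriv_eq, hpsi.deriv]
  have hsq : ((-(-1:ℝ) ^ l.length) / den l t) ^ 2 = 1 / den l t ^ 2 := by
    rw [div_pow, neg_sq]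
    congr 1
    rw [← pow_mul, mul_comm, pow_mul]
    norm_num
  rw [hA, hB, hsq]
  have hdt' : ((Q' l : ℝ) * t + (Q l : ℝ)) ≠ 0 := ne_of_gt (den_pos ht0)
  unfold den
  unfold den at hdt
  field_simp
  ring

end BD

set_option maxHeartbeats 1000000 in
/-- **Bounded distortion for the Gauss map** (Proposition 2.4): there is `C > 0` such that
for every `n ≥ 1`, every word `(i_1,…,i_n) ∈ ℕ^n`, and all `x, y ∈ I_{i_1…i_n}`,
`C⁻¹ ≤ (T^n)'(x)/(T^n)'(y) ≤ C`; moreover `C⁻¹ ≤ |(T^n)'(x)| · |I_{i_1…i_n}| ≤ C`. -/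
theorem bounded_distortion :
    ∃ C : ℝ, 0 < C ∧ ∀ n : ℕ, 1 ≤ n → ∀ i : Fin n → ℕ+,
      (∀ x ∈ wordCyl n i, ∀ y ∈ wordCyl n i,
        C⁻¹ ≤ deriv (gaussMap^[n]) x / deriv (gaussMap^[n]) y ∧
          deriv (gaussMap^[n]) x / deriv (gaussMap^[n]) y ≤ C) ∧
      (∀ x ∈ wordCyl n i,
        C⁻¹ ≤ |deriv (gaussMap^[n]) x| * Metric.diam (wordCyl n i) ∧
          |deriv (gaussMap^[n]) x| * Metric.diam (wordCyl n i) ≤ C) := by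
  classical
  refine ⟨32, by norm_num, ?_⟩
  intro n hn i
  set l := List.ofFn i with hl
  have hlen : l.length = n := List.length_ofFn
  have hQ1 : (1:ℝ) ≤ (BD.Q l : ℝ) := by exact_mod_cast BD.Q_pos l
  have hQ'0 : (0:ℝ) ≤ (BD.Q' l : ℝ) := by exact_mod_cast BD.Q'_nonneg l
  have hQ'Q : (BD.Q' l : ℝ) ≤ (BD.Q l : ℝ) := by exact_mod_cast BD.Q'_le_Q l
  have hQpos : (0:ℝ) < (BD.Q l : ℝ) := by linarith
  have hsgn : ((-1:ℝ)) ^ n ≠ 0 := by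
    intro h
    simp at h
  -- derivative formula
  have hderiv : ∀ x ∈ wordCyl n i, ∃ d : ℝ, (BD.Q l : ℝ) ≤ d ∧ d ≤ 2 * (BD.Q l : ℝ) ∧
      deriv (gaussMap^[n]) x = (-1) ^ n * d ^ 2 := by
    intro x hx
    obtain ⟨t, ht, htI, rfl⟩ := BD.mem_cyl_imp hx
    refine ⟨BD.den l t, ?_, ?_, ?_⟩
    · unfold BD.den
      nlinarith [ht.1.le]
    · unfold BD.den
      nlinarith [ht.2.le, ht.1.le]
    · have hdd := BD.deriv_iterate (l := l) ht
      rwa [hlen] at hdd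
  -- diameter upper bound
  have hdiam_ub : Metric.diam (wordCyl n i) ≤ 1 / (BD.Q l : ℝ) ^ 2 := by
    apply Metric.diam_le_of_forall_dist_le (by positivity)
    intro x hx y hy
    obtain ⟨t, ht, _, rfl⟩ := BD.mem_cyl_imp hx
    obtain ⟨s, hs, _, rfl⟩ := BD.mem_cyl_imp hy
    rw [Real.dist_eq, BD.phi_diff ht.1.le hs.1.le, abs_div]
    have hdt := BD.den_pos (l := l) ht.1.le
    have hds := BD.den_pos (l := l) hs.1.le
    have hdtQ : (BD.Q l : ℝ) ≤ BD.den l t := by unfold BD.den; nlinarith [ht.1.le]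
    have hdsQ : (BD.Q l : ℝ) ≤ BD.den l s := by unfold BD.den; nlinarith [hs.1.le]
    have h2 : |(-1:ℝ) ^ l.length * (t - s)| ≤ 1 := by
      rw [abs_mul, abs_pow, abs_neg, abs_one, one_pow, one_mul, abs_le]
      constructor <;> nlinarith [ht.1, ht.2, hs.1, hs.2]
    have h3 : (BD.Q l : ℝ) ^ 2 ≤ |BD.den l t * BD.den l s| := by
      rw [abs_of_pos (mul_pos hdt hds)]
      nlinarith
    exact div_le_div₀ (by norm_num) h2 (by positivity) h3
  -- diameter lower bound
  have hs2a : (1:ℝ) < Real.sqrt 2 := by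
    nlinarith [Real.sq_sqrt (by norm_num : (0:ℝ) ≤ 2), Real.sqrt_nonneg 2]
  have hs2b : Real.sqrt 2 < 2 := by
    nlinarith [Real.sq_sqrt (by norm_num : (0:ℝ) ≤ 2), Real.sqrt_nonneg 2]
  set t1 : ℝ := Real.sqrt 2 / 4 with ht1_def
  set t2 : ℝ := Real.sqrt 2 / 2 with ht2_def
  have ht1 : t1 ∈ Set.Ioo (0:ℝ) 1 := by
    rw [ht1_def]; constructor
    · nlinarith
    · nlinarith
  have ht2 : t2 ∈ Set.Ioo (0:ℝ) 1 := by
    rw [ht2_def]; constructor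
    · nlinarith
    · nlinarith
  have hI1 : Irrational t1 := by
    rw [ht1_def]
    have := (irrational_div_natCast_iff (n := 4)).mpr ⟨by norm_num, irrational_sqrt_two⟩
    simpa using this
  have hI2 : Irrational t2 := by
    rw [ht2_def]
    have := (irrational_div_natCast_iff (n := 2)).mpr ⟨by norm_num, irrational_sqrt_two⟩
    simpa using this
  have hu1 : BD.phi l t1 ∈ wordCyl n i := BD.imp_mem_cyl ht1 hI1 i
  have hu2 : BD.phi l t2 ∈ wordCyl n i := BD.imp_mem_cyl ht2 hI2 i
  have hbd : Bornology.IsBounded (wordCyl n i) :=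
    (Metric.isBounded_Ioo (0:ℝ) 1).subset (fun x hx => hx.1)
  have hdiam_lb : 1 / (16 * (BD.Q l : ℝ) ^ 2) ≤ Metric.diam (wordCyl n i) := by
    refine le_trans ?_ (Metric.dist_le_diam_of_mem hbd hu2 hu1)
    rw [Real.dist_eq, BD.phi_diff ht2.1.le ht1.1.le, abs_div]
    have hdt1 := BD.den_pos (l := l) ht1.1.le
    have hdt2 := BD.den_pos (l := l) ht2.1.le
    have hdt1Q : BD.den l t1 ≤ 2 * (BD.Q l : ℝ) := by
      unfold BD.den; nlinarith [ht1.1.le, ht1.2.le]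
    have hdt2Q : BD.den l t2 ≤ 2 * (BD.Q l : ℝ) := by
      unfold BD.den; nlinarith [ht2.1.le, ht2.2.le]
    have hgap : (1:ℝ)/4 ≤ t2 - t1 := by
      rw [ht1_def, ht2_def]; nlinarith
    have h2 : (1:ℝ)/4 ≤ |(-1:ℝ) ^ l.length * (t2 - t1)| := by
      rw [abs_mul, abs_pow, abs_neg, abs_one, one_pow, one_mul]
      rw [abs_of_nonneg (by linarith)]
      exact hgap
    have h3 : |BD.den l t2 * BD.den l t1| ≤ 4 * (BD.Q l : ℝ) ^ 2 := by
      rw [abs_of_pos (mul_pos hdt2 hdt1)]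
      nlinarith
    calc 1 / (16 * (BD.Q l : ℝ) ^ 2) = (1/4) / (4 * (BD.Q l : ℝ) ^ 2) := by
          rw [eq_div_iff (by positivity)]
          field_simp
          ring
      _ ≤ |(-1:ℝ) ^ l.length * (t2 - t1)| / |BD.den l t2 * BD.den l t1| := by
          apply div_le_div₀ (by positivity) h2 (by positivity) h3
  have hdiam0 : 0 ≤ Metric.diam (wordCyl n i) := Metric.diam_nonneg
  constructor
  · intro x hx y hy
    obtain ⟨dx, hdx1, hdx2, hdx3⟩ := hderiv x hx
    obtain ⟨dy, hdy1, hdy2, hdy3⟩ := hderiv y hy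
    have hdxpos : (0:ℝ) < dx := lt_of_lt_of_le hQpos hdx1
    have hdypos : (0:ℝ) < dy := lt_of_lt_of_le hQpos hdy1
    have hratio : ((-1:ℝ) ^ n * dx ^ 2) / ((-1:ℝ) ^ n * dy ^ 2) = dx ^ 2 / dy ^ 2 :=
      mul_div_mul_left _ _ hsgn
    rw [hdx3, hdy3, hratio]
    have hdy2 : (0:ℝ) < dy ^ 2 := by positivity
    constructor
    · have hb : (1:ℝ)/4 ≤ dx ^ 2 / dy ^ 2 := by
        rw [le_div_iff₀ hdy2]
        nlinarith
      calc (32:ℝ)⁻¹ ≤ 1/4 := by norm_num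
        _ ≤ _ := hb
    · have hb : dx ^ 2 / dy ^ 2 ≤ 4 := by
        rw [div_le_iff₀ hdy2]
        nlinarith
      linarith
  · intro x hx
    obtain ⟨dx, hdx1, hdx2, hdx3⟩ := hderiv x hx
    have hdxpos : (0:ℝ) < dx := lt_of_lt_of_le hQpos hdx1
    have habs : |deriv (gaussMap^[n]) x| = dx ^ 2 := by
      rw [hdx3, abs_mul, abs_pow, abs_neg, abs_one, one_pow, one_mul,
        abs_of_pos (by positivity)]
    rw [habs]
    constructor
    · have step1 : (BD.Q l : ℝ) ^ 2 * (1 / (16 * (BD.Q l : ℝ) ^ 2)) ≤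
          dx ^ 2 * Metric.diam (wordCyl n i) := by
        apply mul_le_mul (by nlinarith) hdiam_lb (by positivity) (by positivity)
      have step2 : (BD.Q l : ℝ) ^ 2 * (1 / (16 * (BD.Q l : ℝ) ^ 2)) = 1/16 := by
        field_simp
      rw [step2] at step1
      rw [inv_eq_one_div]
      linarith
    · have step1 : dx ^ 2 * Metric.diam (wordCyl n i) ≤
          (2 * (BD.Q l : ℝ)) ^ 2 * (1 / (BD.Q l : ℝ) ^ 2) := by
        apply mul_le_mul (by nlinarith) hdiam_ub hdiam0 (by positivity)
      have step2 : (2 * (BD.Q l : ℝ)) ^ 2 * (1 / (BD.Q l : ℝ) ^ 2) = 4 := by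
        field_simp; ring
      rw [step2] at step1
      linarith
end

section
/- The function −log|T′| is locally Hölder with exponent parameter α = 2/3 for the Gauss map: there exists C > 0 such that for every n ≥ 1 and every word (i_1,…,i_n) ∈ ℕ^n, sup{ |log|T′(x)| − log|T′(y)|| : x, y ∈ I_{i_1…i_n} } ≤ C·(2/3)^n. -/
/-- Contraction of the log-metric under `u ↦ (a+u)` for `a ≥ 1`, `u,v ∈ (0,1)`. -/
lemma gauss_log_contract {a u v : ℝ} (ha : 1 ≤ a) (hu : u ∈ Set.Ioo (0:ℝ) 1)
    (hv : v ∈ Set.Ioo (0:ℝ) 1) :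
    |Real.log (a + u) - Real.log (a + v)| ≤ (1/2) * |Real.log u - Real.log v| := by
  wlog h : u ≤ v generalizing u v
  · rw [abs_sub_comm, abs_sub_comm (Real.log u)]
    exact this hv hu (le_of_not_ge h)
  obtain ⟨hu0, hu1⟩ := hu
  obtain ⟨hv0, hv1⟩ := hv
  have h1 : Real.log (a + u) ≤ Real.log (a + v) := by
    apply Real.log_le_log (by linarith) (by linarith)
  have h2 : Real.log u ≤ Real.log v := Real.log_le_log hu0 h
  rw [abs_sub_comm, abs_of_nonneg (by linarith), abs_sub_comm, abs_of_nonneg (by linarith)]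
  have key : Real.log (u * (a + v) ^ 2) ≤ Real.log (v * (a + u) ^ 2) := by
    apply Real.log_le_log (by positivity)
    nlinarith [mul_nonneg (sub_nonneg.2 h) (sub_nonneg.2 (show u * v ≤ a * a by nlinarith))]
  rw [Real.log_mul (ne_of_gt hu0) (by positivity), Real.log_mul (ne_of_gt hv0) (by positivity),
    Real.log_pow, Real.log_pow] at key
  push_cast at key
  linarith

lemma wordCyl_inv_eq {n : ℕ} {i : Fin (n+1) → ℕ+} {x : ℝ} (hx : x ∈ wordCyl (n+1) i) :
    x⁻¹ = (i 0 : ℝ) + gaussMap x := by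
  obtain ⟨⟨hx0, hx1⟩, hirr, hdig⟩ := hx
  have hxne : x ≠ 0 := ne_of_gt hx0
  have hinv0 : (0:ℝ) ≤ x⁻¹ := by positivity
  have h0 : cfDigit x 0 = (i 0 : ℕ) := hdig 0
  have : ⌊x⁻¹⌋₊ = (i 0 : ℕ) := by simpa [cfDigit] using h0
  have hfl : ((⌊x⁻¹⌋₊ : ℤ) : ℝ) = ((⌊x⁻¹⌋ : ℤ) : ℝ) := by
    rw [Int.natCast_floor_eq_floor hinv0]
  rw [gaussMap, if_neg hxne, Int.fract]
  push_cast [← this]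
  push_cast at hfl
  linarith

lemma wordCyl_shift {n : ℕ} {i : Fin (n+1) → ℕ+} {x : ℝ} (hx : x ∈ wordCyl (n+1) i) :
    gaussMap x ∈ wordCyl n (fun k => i k.succ) := by
  obtain ⟨⟨hx0, hx1⟩, hirr, hdig⟩ := hx
  have hxne : x ≠ 0 := ne_of_gt hx0
  have hgm : gaussMap x = Int.fract x⁻¹ := by rw [gaussMap, if_neg hxne]
  have hinv_irr : Irrational x⁻¹ := hirr.inv
  have hfr_irr : Irrational (gaussMap x) := by
    rw [hgm, Int.fract]
    exact hinv_irr.sub_intCast _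
  refine ⟨⟨?_, ?_⟩, hfr_irr, ?_⟩
  · have h0 : (0:ℝ) ≤ gaussMap x := by rw [hgm]; exact Int.fract_nonneg _
    rcases lt_or_eq_of_le h0 with h | h
    · exact h
    · exact absurd h.symm (by simpa using hfr_irr.ne_int 0)
  · rw [hgm]; exact Int.fract_lt_one _
  · intro k
    have := hdig k.succ
    simpa [cfDigit, Function.iterate_succ_apply] using this

lemma log_diff_le (n : ℕ) : ∀ (i : Fin (n+1) → ℕ+), ∀ x ∈ wordCyl (n+1) i,
    ∀ y ∈ wordCyl (n+1) i, |Real.log x - Real.log y| ≤ (1/2 : ℝ) ^ n := by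
  induction n with
  | zero =>
    intro i x hx y hy
    have hxi := wordCyl_inv_eq hx
    have hyi := wordCyl_inv_eq hy
    obtain ⟨⟨hx0, hx1⟩, _, hdx⟩ := hx
    obtain ⟨⟨hy0, hy1⟩, _, hdy⟩ := hy
    have ha1 : (1:ℝ) ≤ (i 0 : ℝ) := by exact_mod_cast (i 0).one_le
    have hgx := (wordCyl_shift (⟨⟨hx0, hx1⟩, ‹Irrational x›, hdx⟩ : x ∈ wordCyl 1 i)).1
    have hgy := (wordCyl_shift (⟨⟨hy0, hy1⟩, ‹Irrational y›, hdy⟩ : y ∈ wordCyl 1 i)).1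
    -- x⁻¹, y⁻¹ ∈ (i0, i0 + 1)
    have hbx1 : (i 0 : ℝ) < x⁻¹ := by rw [hxi]; linarith [hgx.1]
    have hbx2 : x⁻¹ < (i 0 : ℝ) + 1 := by rw [hxi]; linarith [hgx.2]
    have hby1 : (i 0 : ℝ) < y⁻¹ := by rw [hyi]; linarith [hgy.1]
    have hby2 : y⁻¹ < (i 0 : ℝ) + 1 := by rw [hyi]; linarith [hgy.2]
    have hlx : Real.log x = -Real.log x⁻¹ := by rw [Real.log_inv]; ring
    have hly : Real.log y = -Real.log y⁻¹ := by rw [Real.log_inv]; ring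
    have hub : Real.log ((i 0 : ℝ) + 1) - Real.log (i 0 : ℝ) ≤ 1 := by
      have hd : Real.log ((i 0 : ℝ) + 1) - Real.log (i 0 : ℝ)
          = Real.log (((i 0 : ℝ) + 1) / (i 0 : ℝ)) := by
        rw [Real.log_div (by linarith) (by linarith)]
      rw [hd]
      have := Real.log_le_sub_one_of_pos (show (0:ℝ) < ((i 0 : ℝ) + 1) / (i 0 : ℝ) by positivity)
      have hle : ((i 0 : ℝ) + 1) / (i 0 : ℝ) ≤ 2 := by
        rw [div_le_iff₀ (by linarith)]; linarith
      linarith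
    have m1 : Real.log x⁻¹ ≤ Real.log ((i 0 : ℝ) + 1) :=
      Real.log_le_log (by positivity) (le_of_lt hbx2)
    have m2 : Real.log (i 0 : ℝ) ≤ Real.log x⁻¹ :=
      Real.log_le_log (by linarith) (le_of_lt hbx1)
    have m3 : Real.log y⁻¹ ≤ Real.log ((i 0 : ℝ) + 1) :=
      Real.log_le_log (by positivity) (le_of_lt hby2)
    have m4 : Real.log (i 0 : ℝ) ≤ Real.log y⁻¹ :=
      Real.log_le_log (by linarith) (le_of_lt hby1)
    rw [hlx, hly, pow_zero, abs_sub_le_iff]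
    constructor <;> linarith
  | succ n ih =>
    intro i x hx y hy
    have hxi := wordCyl_inv_eq hx
    have hyi := wordCyl_inv_eq hy
    have hgx := wordCyl_shift hx
    have hgy := wordCyl_shift hy
    have ha1 : (1:ℝ) ≤ (i 0 : ℝ) := by exact_mod_cast (i 0).one_le
    have hlx : Real.log x = -Real.log ((i 0 : ℝ) + gaussMap x) := by
      rw [← hxi, Real.log_inv]; ring
    have hly : Real.log y = -Real.log ((i 0 : ℝ) + gaussMap y) := by
      rw [← hyi, Real.log_inv]; ring
    have hc := gauss_log_contract ha1 hgx.1 hgy.1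
    have hrec := ih _ _ hgx _ hgy
    calc |Real.log x - Real.log y|
        = |Real.log ((i 0 : ℝ) + gaussMap x) - Real.log ((i 0 : ℝ) + gaussMap y)| := by
          rw [hlx, hly, ← abs_neg]; ring_nf
      _ ≤ (1/2) * |Real.log (gaussMap x) - Real.log (gaussMap y)| := hc
      _ ≤ (1/2) * (1/2 : ℝ) ^ n := by linarith [hrec, abs_nonneg (Real.log (gaussMap x) - Real.log (gaussMap y))]
      _ = (1/2 : ℝ) ^ (n+1) := by ring

/-- **`-log|T'|` is locally Hölder with parameter `α = 2/3`** for the Gauss map: there is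
`C > 0` such that the variation of `log|T'| = log (x⁻²)` on any level-`n` cylinder is at
most `C (2/3)^n`. -/
theorem log_deriv_locally_holder :
    ∃ C : ℝ, 0 < C ∧ ∀ n : ℕ, 1 ≤ n → ∀ i : Fin n → ℕ+,
      ∀ x ∈ wordCyl n i, ∀ y ∈ wordCyl n i,
        |Real.log (x⁻¹ ^ 2) - Real.log (y⁻¹ ^ 2)| ≤ C * (2 / 3) ^ n := by
  refine ⟨4, by norm_num, ?_⟩
  intro n hn i x hx y hy
  obtain ⟨m, rfl⟩ : ∃ m, n = m + 1 := ⟨n - 1, by omega⟩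
  have hmain := log_diff_le m i x hx y hy
  have hx0 : (0:ℝ) < x := hx.1.1
  have hy0 : (0:ℝ) < y := hy.1.1
  have hlx : Real.log (x⁻¹ ^ 2) = -(2 * Real.log x) := by
    rw [Real.log_pow, Real.log_inv]; push_cast; ring
  have hly : Real.log (y⁻¹ ^ 2) = -(2 * Real.log y) := by
    rw [Real.log_pow, Real.log_inv]; push_cast; ring
  have heq : |Real.log (x⁻¹ ^ 2) - Real.log (y⁻¹ ^ 2)| = 2 * |Real.log x - Real.log y| := by
    rw [hlx, hly, show -(2 * Real.log x) - -(2 * Real.log y)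
        = -(2 * (Real.log x - Real.log y)) by ring, abs_neg, abs_mul, abs_two]
  have hpow : (1/2:ℝ)^m ≤ (2/3:ℝ)^m := pow_le_pow_left₀ (by norm_num) (by norm_num) m
  have hp0 : (0:ℝ) ≤ (2/3:ℝ)^m := by positivity
  have h4 : (4:ℝ) * (2/3)^(m+1) = (8/3) * (2/3)^m := by ring
  rw [heq]
  linarith
end
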